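/- arXiv:1202.2336 — 4 statements merged into one kernel-verified Lean document; each statement's English description precedes it below -/
import Mathlib

section
/- Let 0 < ε and let S_ε be the ε-comb of a finite nonempty set S of positive reals (defined by the greedy procedure: start with S_ε = {max S}, S' = S \ {max S}; repeatedly add s = min{max S', (min S_ε)/(1+ε)} to S_ε and remove all elements ≥ s from S'). Then |S_ε| ≤ |S|, and for every s ∈ S there exists a unique s' ∈ S_ε with s ≤ s' < (1+ε)·s. -/
/-- One pass of the greedy ε-comb procedure: `S'` is the set of remaining
elements, `Sε` the (nonempty) set built so far. -/
noncomputable def combAux (ε : ℝ) (S' Sε : Finset ℝ) (hSε : Sε.Nonempty) : Finset ℝ :=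
  if h : S'.Nonempty then
    combAux ε
      (S'.filter (fun x => x < min (S'.max' h) (Sε.min' hSε / (1 + ε))))
      (insert (min (S'.max' h) (Sε.min' hSε / (1 + ε))) Sε)
      (Finset.insert_nonempty _ _)
  else Sε
termination_by S'.card
decreasing_by
  apply Finset.card_lt_card
  rw [Finset.ssubset_iff_of_subset (Finset.filter_subset _ _)]
  exact ⟨S'.max' h, S'.max'_mem h, by
    simp only [Finset.mem_filter, not_and, not_lt]
    exact fun _ => min_le_left _ _⟩

/-- The ε-comb of a nonempty finite set `S` of reals. -/
noncomputable def comb (ε : ℝ) (S : Finset ℝ) (hS : S.Nonempty) : Finset ℝ :=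
  combAux ε (S.erase (S.max' hS)) {S.max' hS} (Finset.singleton_nonempty _)



lemma combAux_spec (ε : ℝ) (hε : 0 < ε) :
    ∀ n (S' Sε : Finset ℝ) (hSε : Sε.Nonempty), S'.card = n →
    (∀ x ∈ Sε, 0 < x) →
    (∀ x ∈ S', 0 < x) →
    (∀ x ∈ S', x < Sε.min' hSε) →
    (∀ a ∈ Sε, ∀ b ∈ Sε, a < b → (1+ε)*a ≤ b) →
    (combAux ε S' Sε hSε).card ≤ Sε.card + S'.card ∧
    Sε ⊆ combAux ε S' Sε hSε ∧
    (∀ s ∈ S', ∃ s' ∈ combAux ε S' Sε hSε, s ≤ s' ∧ s' < (1+ε)*s) ∧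
    (∀ a ∈ combAux ε S' Sε hSε, ∀ b ∈ combAux ε S' Sε hSε, a < b → (1+ε)*a ≤ b) := by
  intro n
  induction n using Nat.strong_induction_on with
  | _ n IH =>
    intro S' Sε hSε hcard h1 h2 h3 h4
    by_cases h : S'.Nonempty
    · rw [combAux, dif_pos h]
      set t := min (S'.max' h) (Sε.min' hSε / (1 + ε)) with ht
      have hε1 : (0:ℝ) < 1 + ε := by linarith
      have hminpos : 0 < Sε.min' hSε := h1 _ (Finset.min'_mem _ _)
      have htle : t ≤ Sε.min' hSε / (1 + ε) := min_le_right _ _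
      have htlt : t < Sε.min' hSε := lt_of_le_of_lt htle (div_lt_self hminpos (by linarith))
      have htpos : 0 < t := lt_min (h2 _ (S'.max'_mem h)) (div_pos hminpos hε1)
      have hfc : (S'.filter (fun x => x < t)).card < S'.card := by
        apply Finset.card_lt_card
        rw [Finset.ssubset_iff_of_subset (Finset.filter_subset _ _)]
        exact ⟨S'.max' h, S'.max'_mem h, by
          simp only [Finset.mem_filter, not_and, not_lt]
          exact fun _ => min_le_left _ _⟩
      have hmin' : (insert t Sε).min' (Finset.insert_nonempty _ _) = t := by
        rw [Finset.min'_insert (H := hSε), min_eq_left htlt.le]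
      obtain ⟨ihc, ihs, ihe, ihu⟩ := IH _ (hcard ▸ hfc) (S'.filter (fun x => x < t))
        (insert t Sε) (Finset.insert_nonempty _ _) rfl
        (by intro x hx; rcases Finset.mem_insert.mp hx with rfl | hx
            · exact htpos
            · exact h1 _ hx)
        (fun x hx => h2 _ (Finset.mem_filter.mp hx).1)
        (by intro x hx; rw [hmin']; exact (Finset.mem_filter.mp hx).2)
        (by intro a ha b hb hab
            rcases Finset.mem_insert.mp ha with rfl | ha
            · rcases Finset.mem_insert.mp hb with rfl | hb
              · exact absurd hab (lt_irrefl _)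
              · exact le_trans ((le_div_iff₀' hε1).mp htle) (Finset.min'_le _ _ hb)
            · rcases Finset.mem_insert.mp hb with rfl | hb
              · exact absurd (lt_trans hab htlt) (not_lt.mpr (Finset.min'_le _ _ ha))
              · exact h4 a ha b hb hab)
      refine ⟨?_, ?_, ?_, ihu⟩
      · calc (combAux ε _ _ _).card ≤ (insert t Sε).card + (S'.filter (fun x => x < t)).card := ihc
          _ ≤ (Sε.card + 1) + (S'.filter (fun x => x < t)).card := by
              gcongr; exact Finset.card_insert_le _ _
          _ ≤ Sε.card + S'.card := by omega
      · exact (Finset.subset_insert _ _).trans ihs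
      · intro s hs
        by_cases hst : s < t
        · exact ihe s (Finset.mem_filter.mpr ⟨hs, hst⟩)
        · push_neg at hst
          rcases eq_or_lt_of_le hst with heq | hts
          · exact ⟨t, ihs (Finset.mem_insert_self _ _), heq.ge, by nlinarith [htpos, heq]⟩
          · have hteq : t = Sε.min' hSε / (1 + ε) := by
              rcases min_cases (S'.max' h) (Sε.min' hSε / (1 + ε)) with ⟨he, hle⟩ | ⟨he, hle⟩
              · exact absurd hts (not_lt.mpr (by rw [ht, he]; exact Finset.le_max' S' s hs))
              · exact he
            refine ⟨Sε.min' hSε, ihs ((Finset.subset_insert _ _) (Finset.min'_mem _ _)),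
              (h3 s hs).le, ?_⟩
            rw [hteq] at hts
            rw [div_lt_iff₀ hε1] at hts
            linarith
    · rw [combAux, dif_neg h]
      rw [Finset.not_nonempty_iff_eq_empty] at h
      subst h
      exact ⟨by simp, Finset.Subset.refl _, by simp, h4⟩

theorem stmt_4 (ε : ℝ) (hε : 0 < ε) (S : Finset ℝ) (hS : S.Nonempty)
    (hpos : ∀ s ∈ S, (0:ℝ) < s) :
    (comb ε S hS).card ≤ S.card ∧
    ∀ s ∈ S, ∃! s', s' ∈ comb ε S hS ∧ s ≤ s' ∧ s' < (1 + ε) * s := by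
  set M := S.max' hS with hM
  have hMmem : M ∈ S := S.max'_mem hS
  have hMpos : 0 < M := hpos _ hMmem
  obtain ⟨hc, hsub, hex, huniq⟩ := combAux_spec ε hε (S.erase M).card (S.erase M)
    {M} (Finset.singleton_nonempty _) rfl
    (by intro x hx; rw [Finset.mem_singleton] at hx; subst hx; exact hMpos)
    (fun x hx => hpos _ (Finset.mem_of_mem_erase hx))
    (by intro x hx
        rw [Finset.min'_singleton]
        exact lt_of_le_of_ne (Finset.le_max' _ _ (Finset.mem_of_mem_erase hx))
          (Finset.ne_of_mem_erase hx))
    (by intro a ha b hb hab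
        rw [Finset.mem_singleton] at ha hb
        subst ha; subst hb; exact absurd hab (lt_irrefl _))
  constructor
  · calc (comb ε S hS).card ≤ ({M} : Finset ℝ).card + (S.erase M).card := hc
      _ = 1 + (S.card - 1) := by rw [Finset.card_singleton, Finset.card_erase_of_mem hMmem]
      _ ≤ S.card := by have := Finset.card_pos.mpr hS; omega
  · intro s hs
    have hexist : ∃ s' ∈ comb ε S hS, s ≤ s' ∧ s' < (1 + ε) * s := by
      by_cases hsM : s = M
      · subst hsM
        exact ⟨M, hsub (Finset.mem_singleton_self _), le_refl M, by nlinarith [hMpos]⟩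
      · exact hex s (Finset.mem_erase.mpr ⟨hsM, hs⟩)
    obtain ⟨s', hs'mem, hs'1, hs'2⟩ := hexist
    refine ⟨s', ⟨hs'mem, hs'1, hs'2⟩, ?_⟩
    rintro y ⟨hymem, hy1, hy2⟩
    rcases lt_trichotomy y s' with hlt | heq | hgt
    · exact absurd (huniq y hymem s' hs'mem hlt) (by nlinarith)
    · exact heq
    · exact absurd (huniq s' hs'mem y hymem hgt) (by nlinarith)
end

section
/- In the bunch setup, for any vertices u, v and any index j with 0 ≤ j < k−1: if p_j(u) ∉ B_v, then d(v, p_{j+1}(v)) ≤ d(u, p_j(u)) + d(u, v). -/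
theorem stmt_9 {V : Type*} [MetricSpace V] [Fintype V] (k : ℕ) (hk : 1 ≤ k)
    (A : ℕ → Set V) (hA0 : A 0 = Set.univ) (hAmono : ∀ i, A (i + 1) ⊆ A i)
    (hAk : A k = ∅) (hAne : (A (k - 1)).Nonempty)
    (p : ℕ → V → V)
    (hpmem : ∀ i ≤ k - 1, ∀ u, p i u ∈ A i)
    (hpnear : ∀ i ≤ k - 1, ∀ u, ∀ w ∈ A i, dist u (p i u) ≤ dist u w)
    (B : V → Set V)
    (hB : ∀ u w, w ∈ B u ↔ ∃ i < k, w ∈ A i ∧ w ∉ A (i + 1) ∧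
      (i + 1 < k → dist u w < dist u (p (i + 1) u)))
    (u v : V) (j : ℕ) (hj : j < k - 1)
    (hnot : p j u ∉ B v) :
    dist v (p (j + 1) v) ≤ dist u (p j u) + dist u v := by
  classical
  have hsub : ∀ a b : ℕ, a ≤ b → A b ⊆ A a := by
    intro a b hab
    induction b with
    | zero => simp_all
    | succ n ih =>
      rcases Nat.lt_or_ge a (n + 1) with h | h
      · exact (ih (Nat.lt_succ_iff.mp h)).trans' (hAmono n)
      · have : a = n + 1 := le_antisymm hab h
        simp [this]
  set w := p j u with hw
  have hjk : j ≤ k - 1 := hj.le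
  have hwj : w ∈ A j := hpmem j hjk u
  have hex : ∃ m, w ∉ A m := ⟨k, by simp [hAk]⟩
  set m := Nat.find hex with hm
  have hmspec : w ∉ A m := Nat.find_spec hex
  have hmk : m ≤ k := Nat.find_le (by simp [hAk])
  have hjm : j < m := by
    by_contra h
    push_neg at h
    exact hmspec (hsub m j h hwj)
  have hm1 : 1 ≤ m := le_trans (Nat.succ_le_of_lt (Nat.zero_lt_of_lt hjm)) le_rfl
  set i := m - 1 with hi
  have him : i + 1 = m := Nat.succ_pred_eq_of_pos hm1
  have hwi : w ∈ A i := by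
    by_contra h
    have hle : m ≤ i := Nat.find_le h
    omega
  have hwi1 : w ∉ A (i + 1) := him ▸ hmspec
  have hik : i < k := by omega
  have hnB := (hB v w).not.mp hnot
  push_neg at hnB
  have hkey := hnB i hik hwi hwi1
  obtain ⟨hi1k, hdle⟩ := hkey
  have hji : j + 1 ≤ i + 1 := by omega
  have hpi1 : p (i + 1) v ∈ A (j + 1) := hsub (j + 1) (i + 1) hji (hpmem (i + 1) (by omega) v)
  have h1 : dist v (p (j + 1) v) ≤ dist v (p (i + 1) v) :=
    hpnear (j + 1) (by omega) v _ hpi1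
  calc dist v (p (j + 1) v) ≤ dist v (p (i + 1) v) := h1
    _ ≤ dist v w := hdle
    _ ≤ dist v u + dist u w := dist_triangle _ _ _
    _ = dist u w + dist u v := by rw [dist_comm v u]; ring
end

section
/- In the bunch setup, for any vertices u, v and any even index j with 0 ≤ j ≤ k−3: if p_j(u) ∉ B_v and p_{j+1}(v) ∉ B_u, then d(u, p_{j+2}(u)) ≤ 2·d(u, v) + d(u, p_j(u)). -/
private lemma bunch_aux {V : Type*} (A : ℕ → Set V) (w : V) :
    ∀ n j, w ∈ A j → w ∉ A (j + n) →
      ∃ i, j ≤ i ∧ i < j + n ∧ w ∈ A i ∧ w ∉ A (i + 1) := by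
  intro n
  induction n with
  | zero => intro j h h'; exact absurd h h'
  | succ n ih =>
    intro j h h'
    by_cases hn : w ∈ A (j + n)
    · exact ⟨j + n, Nat.le_add_right _ _, by omega, hn, by rwa [← Nat.add_assoc] at h'⟩
    · obtain ⟨i, h1, h2, h3, h4⟩ := ih j h hn
      exact ⟨i, h1, by omega, h3, h4⟩

private lemma bunch_anti {V : Type*} (A : ℕ → Set V) (hAmono : ∀ i, A (i + 1) ⊆ A i) :
    ∀ a b, a ≤ b → A b ⊆ A a := by
  intro a b hab
  induction b with
  | zero => simp_all
  | succ b ih =>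
    rcases Nat.lt_or_ge a (b + 1) with h | h
    · exact (ih (by omega)).trans' (hAmono b) |>.trans (le_refl _)
    · have : a = b + 1 := by omega
      subst this; exact subset_rfl

theorem stmt_10 {V : Type*} [MetricSpace V] [Fintype V] (k : ℕ) (hk : 1 ≤ k)
    (A : ℕ → Set V) (hA0 : A 0 = Set.univ) (hAmono : ∀ i, A (i + 1) ⊆ A i)
    (hAk : A k = ∅) (hAne : (A (k - 1)).Nonempty)
    (p : ℕ → V → V)
    (hpmem : ∀ i ≤ k - 1, ∀ u, p i u ∈ A i)
    (hpnear : ∀ i ≤ k - 1, ∀ u, ∀ w ∈ A i, dist u (p i u) ≤ dist u w)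
    (B : V → Set V)
    (hB : ∀ u w, w ∈ B u ↔ ∃ i < k, w ∈ A i ∧ w ∉ A (i + 1) ∧
      (i + 1 < k → dist u w < dist u (p (i + 1) u)))
    (u v : V) (j : ℕ) (hje : Even j) (hj : j + 3 ≤ k)
    (h1 : p j u ∉ B v) (h2 : p (j + 1) v ∉ B u) :
    dist u (p (j + 2) u) ≤ 2 * dist u v + dist u (p j u) := by
  have anti := bunch_anti A hAmono
  -- Step 1: d(v, p_{j+1}(v)) ≤ d(v, p_j(u))
  have hpj : p j u ∈ A j := hpmem j (by omega) u
  have hnotk : p j u ∉ A k := by rw [hAk]; exact Set.notMem_empty _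
  obtain ⟨i, hij, hik, hi1, hi2⟩ := bunch_aux A (p j u) (k - j) j hpj
    (by rwa [Nat.add_sub_cancel' (by omega)])
  rw [Nat.add_sub_cancel' (by omega : j ≤ k)] at hik
  have hcond : ¬ (i + 1 < k → dist v (p j u) < dist v (p (i + 1) v)) := by
    intro h; exact h1 ((hB v (p j u)).2 ⟨i, hik, hi1, hi2, h⟩)
  push_neg at hcond
  obtain ⟨hik1, hle1⟩ := hcond
  have step1 : dist v (p (j + 1) v) ≤ dist v (p j u) :=
    le_trans (hpnear (j + 1) (by omega) v (p (i + 1) v)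
      (anti (j + 1) (i + 1) (by omega) (hpmem (i + 1) (by omega) v))) hle1
  -- Step 2: d(u, p_{j+2}(u)) ≤ d(u, p_{j+1}(v))
  have hpv : p (j + 1) v ∈ A (j + 1) := hpmem (j + 1) (by omega) v
  obtain ⟨i', hij', hik', hi1', hi2'⟩ := bunch_aux A (p (j + 1) v) (k - (j + 1)) (j + 1) hpv
    (by rw [Nat.add_sub_cancel' (by omega)]; rw [hAk]; exact Set.notMem_empty _)
  rw [Nat.add_sub_cancel' (by omega : j + 1 ≤ k)] at hik'
  have hcond' : ¬ (i' + 1 < k → dist u (p (j + 1) v) < dist u (p (i' + 1) u)) := by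
    intro h; exact h2 ((hB u (p (j + 1) v)).2 ⟨i', hik', hi1', hi2', h⟩)
  push_neg at hcond'
  obtain ⟨hik1', hle1'⟩ := hcond'
  have step2 : dist u (p (j + 2) u) ≤ dist u (p (j + 1) v) :=
    le_trans (hpnear (j + 2) (by omega) u (p (i' + 1) u)
      (anti (j + 2) (i' + 1) (by omega) (hpmem (i' + 1) (by omega) u))) hle1'
  have tri1 : dist u (p (j + 1) v) ≤ dist u v + dist v (p (j + 1) v) := dist_triangle _ _ _
  have tri2 : dist v (p j u) ≤ dist v u + dist u (p j u) := dist_triangle _ _ _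
  have := dist_comm u v
  linarith
end

section
/- In the bunch setup, suppose the sequence of the Thorup–Zwick query loop is run starting from index i₁ with current endpoints alternating between u and v: set u₀ = u, v₀ = v, w₀ = p_{i₁}(u₀), and while w_t ∉ B_{v_t}, set u_{t+1} = v_t, v_{t+1} = u_t, w_{t+1} = p_{i₁ + t + 1}(u_{t+1}). If d(u, p_{i₁}(u)) ≤ i₁·d(u, v), then for every t ≥ 0 reached by the loop, d(u_t, w_t) ≤ (i₁ + t)·d(u, v). -/
theorem stmt_19 {V : Type*} [MetricSpace V] [Fintype V] (k : ℕ) (hk : 1 ≤ k)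
    (A : ℕ → Set V) (hA0 : A 0 = Set.univ) (hAmono : ∀ i, A (i + 1) ⊆ A i)
    (hAk : A k = ∅) (hAne : (A (k - 1)).Nonempty)
    (p : ℕ → V → V)
    (hpmem : ∀ i ≤ k - 1, ∀ u, p i u ∈ A i)
    (hpnear : ∀ i ≤ k - 1, ∀ u, ∀ w ∈ A i, dist u (p i u) ≤ dist u w)
    (B : V → Set V)
    (hB : ∀ u w, w ∈ B u ↔ ∃ i < k, w ∈ A i ∧ w ∉ A (i + 1) ∧
      (i + 1 < k → dist u w < dist u (p (i + 1) u)))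
    (u v : V) (i₁ : ℕ)
    (us vs ws : ℕ → V)
    (hu0 : us 0 = u) (hv0 : vs 0 = v) (hw0 : ws 0 = p i₁ u)
    (hurec : ∀ t, us (t + 1) = vs t) (hvrec : ∀ t, vs (t + 1) = us t)
    (hwrec : ∀ t, ws (t + 1) = p (i₁ + t + 1) (us (t + 1)))
    (hstart : dist u (p i₁ u) ≤ (i₁ : ℝ) * dist u v)
    (T : ℕ) (hreach : ∀ s < T, ws s ∉ B (vs s)) (hT : i₁ + T ≤ k - 1) :
    dist (us T) (ws T) ≤ ((i₁ : ℝ) + T) * dist u v := by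
  classical
  have hanti : Antitone A := antitone_nat_of_succ_le hAmono
  have halt : ∀ t, (us t = u ∧ vs t = v) ∨ (us t = v ∧ vs t = u) := by
    intro t
    induction t with
    | zero => exact Or.inl ⟨hu0, hv0⟩
    | succ t ih =>
      rcases ih with ⟨h1, h2⟩ | ⟨h1, h2⟩
      · exact Or.inr ⟨by rw [hurec, h2], by rw [hvrec, h1]⟩
      · exact Or.inl ⟨by rw [hurec, h2], by rw [hvrec, h1]⟩
  have hduv : ∀ t, dist (us t) (vs t) = dist u v := by
    intro t
    rcases halt t with ⟨h1, h2⟩ | ⟨h1, h2⟩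
    · rw [h1, h2]
    · rw [h1, h2, dist_comm]
  have hwmem : ∀ t, i₁ + t ≤ k - 1 → ws t ∈ A (i₁ + t) := by
    intro t ht
    cases t with
    | zero => rw [hw0]; simpa using hpmem i₁ ht u
    | succ t => rw [hwrec]; exact hpmem _ ht _
  induction T with
  | zero =>
    rw [hu0, hw0]
    simpa using hstart
  | succ T ih =>
    have hT' : i₁ + T ≤ k - 1 := by omega
    have IH := ih (fun s hs => hreach s (by omega)) hT'
    have hwA : ws T ∈ A (i₁ + T) := hwmem T hT'
    have hex : ∃ m, ws T ∉ A (i₁ + T + 1 + m) := by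
      refine ⟨k - (i₁ + T + 1), ?_⟩
      rw [show i₁ + T + 1 + (k - (i₁ + T + 1)) = k by omega, hAk]
      exact Set.notMem_empty _
    set m := Nat.find hex with hm
    have hwni : ws T ∉ A (i₁ + T + m + 1) := by
      have := Nat.find_spec hex
      rwa [show i₁ + T + 1 + m = i₁ + T + m + 1 by omega] at this
    have hwi : ws T ∈ A (i₁ + T + m) := by
      rcases Nat.eq_zero_or_pos m with h | h
      · rw [h]; exact hwA
      · have h2 := Nat.find_min hex (show m - 1 < m by omega)
        have h3 : ws T ∈ A (i₁ + T + 1 + (m - 1)) := not_not.mp h2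
        rwa [show i₁ + T + 1 + (m - 1) = i₁ + T + m by omega] at h3
    have hik : i₁ + T + m < k := by
      by_contra h
      push_neg at h
      have := hanti h hwi
      rw [hAk] at this
      exact this
    have hnB := hreach T (by omega)
    rw [hB] at hnB
    push_neg at hnB
    obtain ⟨hik2, hge⟩ := hnB (i₁ + T + m) hik hwi hwni
    have hple : p (i₁ + T + m + 1) (vs T) ∈ A (i₁ + T + 1) :=
      hanti (by omega) (hpmem _ (by omega) _)
    have h1 : dist (vs T) (p (i₁ + T + 1) (vs T)) ≤ dist (vs T) (ws T) := by
      calc dist (vs T) (p (i₁ + T + 1) (vs T))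
          ≤ dist (vs T) (p (i₁ + T + m + 1) (vs T)) := hpnear _ (by omega) _ _ hple
        _ ≤ dist (vs T) (ws T) := hge
    have h2 : dist (vs T) (ws T) ≤ dist u v + dist (us T) (ws T) := by
      calc dist (vs T) (ws T) ≤ dist (vs T) (us T) + dist (us T) (ws T) :=
            dist_triangle _ _ _
        _ = dist u v + dist (us T) (ws T) := by rw [dist_comm (vs T), hduv T]
    rw [hurec, hwrec, hurec]
    push_cast
    calc dist (vs T) (p (i₁ + T + 1) (vs T)) ≤ dist u v + dist (us T) (ws T) :=
          h1.trans h2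
      _ ≤ dist u v + ((i₁ : ℝ) + T) * dist u v := by linarith
      _ = ((i₁ : ℝ) + (T + 1)) * dist u v := by ring
end
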